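/- For an even integer ℓ, there exists an acute lattice triangle with lattice perimeter ℓ whose circumcenter is a lattice point if and only if ℓ = 8 or ℓ ≥ 12; moreover no lattice triangle with odd lattice perimeter can have its circumcenter on the lattice. -/

import Mathlib

/-- Lattice length of the segment joining two lattice points. -/
def llen (P Q : ℤ × ℤ) : ℕ := Int.gcd (P.1 - Q.1) (P.2 - Q.2)

/-- Integer dot product on `ℤ × ℤ`. -/
def dotv (u v : ℤ × ℤ) : ℤ := u.1 * v.1 + u.2 * v.2

/-- The three vertices are not collinear (a genuine triangle). -/
def Noncollinear (V₀ V₁ V₂ : ℤ × ℤ) : Prop :=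
  (V₁.1 - V₀.1) * (V₂.2 - V₀.2) - (V₂.1 - V₀.1) * (V₁.2 - V₀.2) ≠ 0

/-- All three interior angles are strictly acute (positive dot products at each vertex). -/
def IsAcute (V₀ V₁ V₂ : ℤ × ℤ) : Prop :=
  0 < dotv (V₁ - V₀) (V₂ - V₀) ∧ 0 < dotv (V₀ - V₁) (V₂ - V₁) ∧
    0 < dotv (V₀ - V₂) (V₁ - V₂)

/-- `H` is the orthocenter of the triangle `V₀V₁V₂`. -/
def IsOrthocenter (H V₀ V₁ V₂ : ℤ × ℤ) : Prop :=
  dotv (H - V₀) (V₁ - V₂) = 0 ∧ dotv (H - V₁) (V₂ - V₀) = 0 ∧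
    dotv (H - V₂) (V₀ - V₁) = 0

/-- `F` is the circumcenter of the triangle `V₀V₁V₂` (equidistant from the vertices). -/
def IsCircumcenter (F V₀ V₁ V₂ : ℤ × ℤ) : Prop :=
  dotv (F - V₀) (F - V₀) = dotv (F - V₁) (F - V₁) ∧
    dotv (F - V₀) (F - V₀) = dotv (F - V₂) (F - V₂)

/-- Lattice perimeter of a lattice triangle. -/
def latPerim (V₀ V₁ V₂ : ℤ × ℤ) : ℕ := llen V₀ V₁ + llen V₁ V₂ + llen V₀ V₂

/-- The interior angle of the triangle at vertex `V`, with the other vertices `A`, `B`. -/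
noncomputable def angleAt (V A B : ℤ × ℤ) : ℝ :=
  Real.arccos ((((A.1 - V.1) * (B.1 - V.1) + (A.2 - V.2) * (B.2 - V.2) : ℤ) : ℝ) /
    (Real.sqrt (((A.1 - V.1) ^ 2 + (A.2 - V.2) ^ 2 : ℤ)) *
      Real.sqrt (((B.1 - V.1) ^ 2 + (B.2 - V.2) ^ 2 : ℤ))))
-- chord lemma development
lemma zmod2aux : ∀ t g e₁ e₂ u v : ZMod 2, u*e₁+v*e₂ = 1 → g*e₁ - t*e₂ = 0 → t*e₁+g*e₂ = 0 → t = g := by decide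

lemma zmod3aux : ∀ e₁ e₂ u v : ZMod 3, u*e₁+v*e₂ = 1 → e₁^2+e₂^2 ≠ 0 := by decide

lemma chord (a b : ℤ × ℤ) (hne : ¬(a.1 - b.1 = 0 ∧ a.2 - b.2 = 0))
    (heq : a.1^2+a.2^2 = b.1^2+b.2^2) :
    ∃ t q : ℤ, 1 ≤ q ∧
      q * (t^2 + (Int.gcd (a.1-b.1) (a.2-b.2) : ℤ)^2) = 4*(a.1^2+a.2^2) ∧
      4*(a.1*b.1+a.2*b.2) = q*(t^2 - (Int.gcd (a.1-b.1) (a.2-b.2) : ℤ)^2) ∧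
      2*(a.1*b.2 - a.2*b.1) = q*((Int.gcd (a.1-b.1) (a.2-b.2) : ℤ)*t) ∧
      (t - (Int.gcd (a.1-b.1) (a.2-b.2) : ℤ)) % 2 = 0 ∧
      ¬ (3:ℤ) ∣ q ∧
      (t = 0 → a.1+b.1 = 0 ∧ a.2+b.2 = 0) := by
  have hg0 : Int.gcd (a.1-b.1) (a.2-b.2) ≠ 0 := by
    rw [Ne, Int.gcd_eq_zero_iff]; tauto
  set gz : ℤ := (Int.gcd (a.1-b.1) (a.2-b.2) : ℤ) with hgzdef
  have hgz0 : gz ≠ 0 := by exact_mod_cast Nat.cast_ne_zero.mpr hg0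
  obtain ⟨e₁, e₂, hs1, hs2, hcop⟩ :
      ∃ e₁ e₂ : ℤ, gz * e₁ = a.1 - b.1 ∧ gz * e₂ = a.2 - b.2 ∧ Int.gcd e₁ e₂ = 1 := by
    refine ⟨(a.1-b.1)/gz, (a.2-b.2)/gz, Int.mul_ediv_cancel' (Int.gcd_dvd_left (a.1-b.1) (a.2-b.2)),
      Int.mul_ediv_cancel' (Int.gcd_dvd_right (a.1-b.1) (a.2-b.2)), ?_⟩
    rw [hgzdef]
    exact Int.gcd_div_gcd_div_gcd (Nat.pos_of_ne_zero hg0)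
  clear_value gz
  obtain ⟨u, v, huv⟩ := Int.isCoprime_iff_gcd_eq_one.mpr hcop
  have horth : (a.1+b.1) * (a.1-b.1) + (a.2+b.2) * (a.2-b.2) = 0 := by
    linear_combination heq
  have he_orth : (a.1+b.1) * e₁ + (a.2+b.2) * e₂ = 0 := by
    have h2 : gz * ((a.1+b.1) * e₁ + (a.2+b.2) * e₂) = 0 := by
      linear_combination horth + (a.1+b.1) * hs1 + (a.2+b.2) * hs2
    rcases mul_eq_zero.mp h2 with h | h
    · exact absurd h hgz0
    · exact h
  obtain ⟨t, htdef⟩ : ∃ t : ℤ, t = u*(a.2+b.2) - v*(a.1+b.1) := ⟨_, rfl⟩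
  have hp2 : a.2+b.2 = t*e₁ := by
    rw [htdef]; linear_combination v * he_orth - (a.2+b.2) * huv
  have hp1 : a.1+b.1 = -(t*e₂) := by
    rw [htdef]; linear_combination u * he_orth - (a.1+b.1) * huv
  have haux1 : 2*a.1 = gz*e₁ - t*e₂ := by linear_combination hp1 - hs1
  have haux2 : 2*a.2 = t*e₁ + gz*e₂ := by linear_combination hp2 - hs2
  have haux3 : 2*b.1 = -(gz*e₁) - t*e₂ := by linear_combination hp1 + hs1
  have haux4 : 2*b.2 = t*e₁ - gz*e₂ := by linear_combination hp2 + hs2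
  have he0 : ¬(e₁ = 0 ∧ e₂ = 0) := by
    rintro ⟨h1, h2⟩; rw [h1, h2] at huv; simp at huv
  refine ⟨t, e₁^2+e₂^2, ?_, ?_, ?_, ?_, ?_, ?_, ?_⟩
  · by_cases h : e₁ = 0
    · have h2 : e₂ ≠ 0 := by tauto
      have : 1 ≤ e₂^2 := by rcases lt_or_gt_of_ne h2 with h'|h' <;> nlinarith
      nlinarith [sq_nonneg e₁]
    · have : 1 ≤ e₁^2 := by rcases lt_or_gt_of_ne h with h'|h' <;> nlinarith
      nlinarith [sq_nonneg e₂]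
  · have hh : 2*((e₁^2+e₂^2) * (t^2 + gz^2)) = 8*(a.1^2+a.2^2) := by
      linear_combination (-(2*a.1+(gz*e₁ - t*e₂)))*haux1 - (2*a.2+(t*e₁ + gz*e₂))*haux2 -
        (2*b.1+(-(gz*e₁) - t*e₂))*haux3 - (2*b.2+(t*e₁ - gz*e₂))*haux4 - 4*heq
    linarith
  · linear_combination (2*b.1)*haux1 + (gz*e₁ - t*e₂)*haux3 + (2*b.2)*haux2 + (t*e₁ + gz*e₂)*haux4
  · have hh : 4*(a.1*b.2 - a.2*b.1) = 2*((e₁^2+e₂^2)*(gz*t)) := by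
      linear_combination (2*b.2)*haux1 + (gz*e₁ - t*e₂)*haux4 - (2*b.1)*haux2 - (t*e₁ + gz*e₂)*haux3
    linarith
  · -- parity
    have hc1 : ((gz : ZMod 2)) * (e₁ : ZMod 2) - (t : ZMod 2) * (e₂ : ZMod 2) = 0 := by
      have h := congrArg (fun z : ℤ => (z : ZMod 2)) haux1
      push_cast at h
      have h2 : ((2 : ZMod 2)) = 0 := by decide
      rw [h2] at h; linear_combination -h
    have hc2 : ((t : ZMod 2)) * (e₁ : ZMod 2) + (gz : ZMod 2) * (e₂ : ZMod 2) = 0 := by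
      have h := congrArg (fun z : ℤ => (z : ZMod 2)) haux2
      push_cast at h
      have h2 : ((2 : ZMod 2)) = 0 := by decide
      rw [h2] at h; linear_combination -h
    have hcu : ((u : ZMod 2)) * (e₁ : ZMod 2) + (v : ZMod 2) * (e₂ : ZMod 2) = 1 := by
      have h := congrArg (fun z : ℤ => (z : ZMod 2)) huv
      push_cast at h; exact h
    have := zmod2aux (t : ZMod 2) (gz : ZMod 2) (e₁ : ZMod 2) (e₂ : ZMod 2) (u : ZMod 2) (v : ZMod 2) hcu hc1 hc2
    have hmod := (ZMod.intCast_eq_intCast_iff' (a := t) (b := gz) (c := 2)).mp this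
    omega
  · intro h3
    have hz : ((e₁^2+e₂^2 : ℤ) : ZMod 3) = 0 := by
      exact (ZMod.intCast_zmod_eq_zero_iff_dvd _ 3).mpr h3
    push_cast at hz
    have hcu : ((u : ZMod 3)) * (e₁ : ZMod 3) + (v : ZMod 3) * (e₂ : ZMod 3) = 1 := by
      have h := congrArg (fun z : ℤ => (z : ZMod 3)) huv
      push_cast at h; exact h
    exact zmod3aux (e₁ : ZMod 3) (e₂ : ZMod 3) (u : ZMod 3) (v : ZMod 3) hcu hz
  · intro ht0
    rw [ht0] at hp1 hp2
    constructor <;> [simpa using hp1; simpa using hp2]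
-- abstract sign lemma
lemma signAux (N x₁ x₂ x₃ C₁ C₂ C₃ : ℤ) (hN : 0 < N)
    (hI1 : N*C₁ + C₂*x₃ + C₃*x₂ = 0) (hI2 : N*C₂ + C₃*x₁ + C₁*x₃ = 0)
    (hI3 : N*C₃ + C₁*x₂ + C₂*x₁ = 0)
    (hB3 : N*x₃ = x₁*x₂ - C₁*C₂)
    (hP1 : C₁^2 + x₁^2 = N^2) (hP2 : C₂^2 + x₂^2 = N^2) (hP3 : C₃^2 + x₃^2 = N^2)
    (hd1 : 0 < N + x₁ - x₂ - x₃) (hd2 : 0 < N + x₂ - x₁ - x₃) (hd3 : 0 < N + x₃ - x₁ - x₂)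
    (h1 : 0 < C₁) (h2 : 0 < C₂) (h3 : C₃ < 0) : False := by
  have hx3 : x₃ < N ∧ -N < x₃ := by constructor <;> nlinarith
  have key : (N + x₃) * (C₁ + C₂) = (-C₃) * (x₁ + x₂) := by linear_combination hI1 + hI2
  have hx12 : 0 < x₁ + x₂ := by nlinarith
  have hlt : x₁ + x₂ < N + x₃ := by linarith
  have hC : C₁ + C₂ < -C₃ := by nlinarith
  have hsq : (x₁ - x₂)^2 > (N - x₃)^2 := by nlinarith
  have habs1 : x₁ - x₂ < N - x₃ := by linarith
  have habs2 : x₂ - x₁ < N - x₃ := by linarith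
  nlinarith

lemma signAux' (N x₁ x₂ x₃ C₁ C₂ C₃ : ℤ) (hN : 0 < N)
    (hI1 : N*C₁ + C₂*x₃ + C₃*x₂ = 0) (hI2 : N*C₂ + C₃*x₁ + C₁*x₃ = 0)
    (hI3 : N*C₃ + C₁*x₂ + C₂*x₁ = 0)
    (hB3 : N*x₃ = x₁*x₂ - C₁*C₂)
    (hP1 : C₁^2 + x₁^2 = N^2) (hP2 : C₂^2 + x₂^2 = N^2) (hP3 : C₃^2 + x₃^2 = N^2)
    (hd1 : 0 < N + x₁ - x₂ - x₃) (hd2 : 0 < N + x₂ - x₁ - x₃) (hd3 : 0 < N + x₃ - x₁ - x₂)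
    (h1 : C₁ < 0) (h2 : C₂ < 0) (h3 : 0 < C₃) : False := by
  exact signAux N x₁ x₂ x₃ (-C₁) (-C₂) (-C₃) hN (by linear_combination -hI1)
    (by linear_combination -hI2) (by linear_combination -hI3) (by linear_combination hB3)
    (by linear_combination hP1) (by linear_combination hP2) (by linear_combination hP3)
    hd1 hd2 hd3 (by linarith) (by linarith) (by linarith)

lemma sameSign (N x₁ x₂ x₃ C₁ C₂ C₃ : ℤ) (hN : 0 < N)
    (hI1 : N*C₁ + C₂*x₃ + C₃*x₂ = 0) (hI2 : N*C₂ + C₃*x₁ + C₁*x₃ = 0)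
    (hI3 : N*C₃ + C₁*x₂ + C₂*x₁ = 0)
    (hB1 : N*x₁ = x₂*x₃ - C₂*C₃) (hB2 : N*x₂ = x₃*x₁ - C₃*C₁) (hB3 : N*x₃ = x₁*x₂ - C₁*C₂)
    (hP1 : C₁^2 + x₁^2 = N^2) (hP2 : C₂^2 + x₂^2 = N^2) (hP3 : C₃^2 + x₃^2 = N^2)
    (hd1 : 0 < N + x₁ - x₂ - x₃) (hd2 : 0 < N + x₂ - x₁ - x₃) (hd3 : 0 < N + x₃ - x₁ - x₂)
    (hC1 : C₁ ≠ 0) (hC2 : C₂ ≠ 0) (hC3 : C₃ ≠ 0) :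
    (0 < C₁ ∧ 0 < C₂ ∧ 0 < C₃) ∨ (C₁ < 0 ∧ C₂ < 0 ∧ C₃ < 0) := by
  rcases lt_or_gt_of_ne hC1 with s1 | s1 <;> rcases lt_or_gt_of_ne hC2 with s2 | s2 <;>
    rcases lt_or_gt_of_ne hC3 with s3 | s3
  · exact Or.inr ⟨s1, s2, s3⟩
  · exact absurd (signAux' N x₁ x₂ x₃ C₁ C₂ C₃ hN hI1 hI2 hI3 hB3 hP1 hP2 hP3 hd1 hd2 hd3 s1 s2 s3) id
  · -- C₁<0, C₂>0, C₃<0 : flip → (+,−,+) : perm (3,1,2) flipped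
    exact absurd (signAux N x₃ x₁ x₂ (-C₃) (-C₁) (-C₂) hN (by linear_combination -hI3)
      (by linear_combination -hI1) (by linear_combination -hI2) (by linear_combination hB2)
      (by linear_combination hP3) (by linear_combination hP1) (by linear_combination hP2)
      (by linarith) (by linarith) (by linarith) (by linarith) (by linarith) (by linarith)) id
  · -- C₁<0, C₂>0, C₃>0 : perm (2,3,1)
    exact absurd (signAux N x₂ x₃ x₁ C₂ C₃ C₁ hN hI2 hI3 hI1 hB1 hP2 hP3 hP1
      (by linarith) (by linarith) (by linarith) s2 s3 s1) id
  · -- C₁>0, C₂<0, C₃<0 : flip → (−,+,+) : perm (2,3,1) flipped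
    exact absurd (signAux N x₂ x₃ x₁ (-C₂) (-C₃) (-C₁) hN (by linear_combination -hI2)
      (by linear_combination -hI3) (by linear_combination -hI1) (by linear_combination hB1)
      (by linear_combination hP2) (by linear_combination hP3) (by linear_combination hP1)
      (by linarith) (by linarith) (by linarith) (by linarith) (by linarith) (by linarith)) id
  · -- C₁>0, C₂<0, C₃>0 : perm (3,1,2)
    exact absurd (signAux N x₃ x₁ x₂ C₃ C₁ C₂ hN hI3 hI1 hI2 hB2 hP3 hP1 hP2
      (by linarith) (by linarith) (by linarith) s3 s1 s2) id
  · -- C₁>0, C₂>0, C₃<0 : direct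
    exact absurd (signAux N x₁ x₂ x₃ C₁ C₂ C₃ hN hI1 hI2 hI3 hB3 hP1 hP2 hP3
      hd1 hd2 hd3 s1 s2 s3) id
  · exact Or.inl ⟨s1, s2, s3⟩

lemma starAux (g₁ g₂ g₃ t₁ t₂ t₃ q₁ q₂ q₃ N x₁ x₂ x₃ C₁ C₂ C₃ : ℤ)
    (hq₁ : 0 < q₁) (hq₂ : 0 < q₂) (hq₃ : 0 < q₃) (hN : 0 < N)
    (h4N₃ : q₃*(t₃^2+g₃^2) = 4*N)
    (hx₁ : 4*x₁ = q₁*(t₁^2-g₁^2)) (hx₂ : 4*x₂ = q₂*(t₂^2-g₂^2)) (hx₃ : 4*x₃ = q₃*(t₃^2-g₃^2))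
    (hC₁ : 2*C₁ = q₁*(g₁*t₁)) (hC₂ : 2*C₂ = q₂*(g₂*t₂)) (hC₃ : 2*C₃ = q₃*(g₃*t₃))
    (hB3 : N*x₃ = x₁*x₂ - C₁*C₂) (hI3 : N*C₃ + C₁*x₂ + C₂*x₁ = 0) :
    g₁*(t₂*t₃) + g₂*(t₁*t₃) + g₃*(t₁*t₂) = g₁*g₂*g₃ := by
  have hRe : q₁*q₂*((t₁^2-g₁^2)*(t₂^2-g₂^2) - 4*(g₁*t₁)*(g₂*t₂)) = 4*N*(q₃*(t₃^2-g₃^2)) := by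
    linear_combination (-16)*hB3 - (q₂*(t₂^2-g₂^2))*hx₁ - (4*x₁)*hx₂ + (4*(q₂*(g₂*t₂)))*hC₁ +
      (8*C₁)*hC₂ + (4*N)*hx₃
  have hIm : q₁*q₂*((g₁*t₁)*(t₂^2-g₂^2) + (g₂*t₂)*(t₁^2-g₁^2)) = -(4*N)*(q₃*(g₃*t₃)) := by
    linear_combination 8*hI3 - (q₂*(t₂^2-g₂^2))*hC₁ - (2*C₁)*hx₂ - (q₁*(t₁^2-g₁^2))*hC₂ -
      (2*C₂)*hx₁ - (4*N)*hC₃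
  set R : ℤ := t₁*t₂*t₃ - t₁*g₂*g₃ - g₁*t₂*g₃ - g₁*g₂*t₃ with hRdef
  set I : ℤ := g₁*(t₂*t₃) + g₂*(t₁*t₃) + g₃*(t₁*t₂) - g₁*g₂*g₃ with hIdef
  have hRe2 : q₁*q₂*q₃*(R^2 - I^2) = 64*N^3 := by
    rw [hRdef, hIdef]
    linear_combination (q₃*(t₃^2-g₃^2))*hRe - (4*q₃*(g₃*t₃))*hIm +
      (4*N*(q₃*(t₃^2+g₃^2)+4*N))*h4N₃
  have h2RI : (q₁*q₂*q₃) * (2*(R*I)) = 0 := by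
    rw [hRdef, hIdef]
    linear_combination (2*q₃*(g₃*t₃))*hRe + (2*q₃*(t₃^2-g₃^2))*hIm
  have hq : (0:ℤ) < q₁*q₂*q₃ := by positivity
  have hRI : R * I = 0 := by
    rcases mul_eq_zero.mp h2RI with h | h
    · exact absurd h (by positivity)
    · linarith
  rcases mul_eq_zero.mp hRI with hR | hI0
  · exfalso
    rw [hR] at hRe2
    nlinarith [mul_nonneg (mul_nonneg hq₁.le hq₂.le) hq₃.le, sq_nonneg I, pow_pos hN 3,
      mul_nonneg (mul_nonneg (mul_nonneg hq₁.le hq₂.le) hq₃.le) (sq_nonneg I)]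
  · rw [hIdef] at hI0
    linarith

set_option maxHeartbeats 4000000 in
lemma killSorted (g₁ g₂ g₃ t₁ t₂ t₃ q₁ q₂ q₃ N : ℤ)
    (hg₁ : 1 ≤ g₁) (hg₂ : 1 ≤ g₂) (hg₃ : 1 ≤ g₃)
    (ht₁ : 1 ≤ t₁) (ht₂ : 1 ≤ t₂) (ht₃ : 1 ≤ t₃)
    (hq₁ : 1 ≤ q₁) (hq₂ : 1 ≤ q₂) (hq₃ : 1 ≤ q₃)
    (hp₁ : (t₁-g₁) % 2 = 0) (hp₂ : (t₂-g₂) % 2 = 0) (hp₃ : (t₃-g₃) % 2 = 0)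
    (h3₁ : ¬(3:ℤ) ∣ q₁) (h3₂ : ¬(3:ℤ) ∣ q₂) (h3₃ : ¬(3:ℤ) ∣ q₃)
    (hN₁ : q₁*(t₁^2+g₁^2) = 4*N) (hN₂ : q₂*(t₂^2+g₂^2) = 4*N) (hN₃ : q₃*(t₃^2+g₃^2) = 4*N)
    (star : g₁*(t₂*t₃) + g₂*(t₁*t₃) + g₃*(t₁*t₂) = g₁*g₂*g₃)
    (ho1 : g₁ ≤ g₂) (ho2 : g₂ ≤ g₃)
    (hsum : g₁+g₂+g₃ = 4 ∨ g₁+g₂+g₃ = 6 ∨ g₁+g₂+g₃ = 10) : False := by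
  have m12 : 1 ≤ t₁*t₂ := by nlinarith
  have m13 : 1 ≤ t₁*t₃ := by nlinarith
  have m23 : 1 ≤ t₂*t₃ := by nlinarith
  have hb12 : t₁*t₂ ≤ g₁*g₂ := by nlinarith [mul_pos (show (0:ℤ) < g₁ by linarith) (show (0:ℤ) < g₂ by linarith)]
  have ht1b : t₁ ≤ g₁*g₂ := by nlinarith
  have ht2b : t₂ ≤ g₁*g₂ := by nlinarith
  have hg1b : g₁ ≤ 3 := by omega
  have hg2b : g₂ ≤ 5 := by omega
  have hg3b : g₃ ≤ 8 := by omega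
  interval_cases g₁ <;> interval_cases g₂ <;> interval_cases g₃ <;>
    first
      | omega
      | (have h1 : t₁ ≤ 9 := by omega
         have h2 : t₂ ≤ 9 := by omega
         interval_cases t₁ <;> interval_cases t₂ <;> omega)

lemma killMain (g₁ g₂ g₃ t₁ t₂ t₃ q₁ q₂ q₃ N : ℤ)
    (hg₁ : 1 ≤ g₁) (hg₂ : 1 ≤ g₂) (hg₃ : 1 ≤ g₃)
    (ht₁ : 1 ≤ t₁) (ht₂ : 1 ≤ t₂) (ht₃ : 1 ≤ t₃)
    (hq₁ : 1 ≤ q₁) (hq₂ : 1 ≤ q₂) (hq₃ : 1 ≤ q₃)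
    (hp₁ : (t₁-g₁) % 2 = 0) (hp₂ : (t₂-g₂) % 2 = 0) (hp₃ : (t₃-g₃) % 2 = 0)
    (h3₁ : ¬(3:ℤ) ∣ q₁) (h3₂ : ¬(3:ℤ) ∣ q₂) (h3₃ : ¬(3:ℤ) ∣ q₃)
    (hN₁ : q₁*(t₁^2+g₁^2) = 4*N) (hN₂ : q₂*(t₂^2+g₂^2) = 4*N) (hN₃ : q₃*(t₃^2+g₃^2) = 4*N)
    (star : g₁*(t₂*t₃) + g₂*(t₁*t₃) + g₃*(t₁*t₂) = g₁*g₂*g₃)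
    (hsum : g₁+g₂+g₃ = 4 ∨ g₁+g₂+g₃ = 6 ∨ g₁+g₂+g₃ = 10) : False := by
  rcases le_total g₁ g₂ with h1 | h1
  · rcases le_total g₂ g₃ with h2 | h2
    · exact killSorted g₁ g₂ g₃ t₁ t₂ t₃ q₁ q₂ q₃ N hg₁ hg₂ hg₃ ht₁ ht₂ ht₃ hq₁ hq₂ hq₃
        hp₁ hp₂ hp₃ h3₁ h3₂ h3₃ hN₁ hN₂ hN₃ star h1 h2 (by omega)
    · rcases le_total g₁ g₃ with h3 | h3
      · exact killSorted g₁ g₃ g₂ t₁ t₃ t₂ q₁ q₃ q₂ N hg₁ hg₃ hg₂ ht₁ ht₃ ht₂ hq₁ hq₃ hq₂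
          hp₁ hp₃ hp₂ h3₁ h3₃ h3₂ hN₁ hN₃ hN₂ (by linear_combination star) h3 h2 (by omega)
      · exact killSorted g₃ g₁ g₂ t₃ t₁ t₂ q₃ q₁ q₂ N hg₃ hg₁ hg₂ ht₃ ht₁ ht₂ hq₃ hq₁ hq₂
          hp₃ hp₁ hp₂ h3₃ h3₁ h3₂ hN₃ hN₁ hN₂ (by linear_combination star) h3 h1 (by omega)
  · rcases le_total g₁ g₃ with h2 | h2
    · exact killSorted g₂ g₁ g₃ t₂ t₁ t₃ q₂ q₁ q₃ N hg₂ hg₁ hg₃ ht₂ ht₁ ht₃ hq₂ hq₁ hq₃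
        hp₂ hp₁ hp₃ h3₂ h3₁ h3₃ hN₂ hN₁ hN₃ (by linear_combination star) h1 h2 (by omega)
    · rcases le_total g₂ g₃ with h3 | h3
      · exact killSorted g₂ g₃ g₁ t₂ t₃ t₁ q₂ q₃ q₁ N hg₂ hg₃ hg₁ ht₂ ht₃ ht₁ hq₂ hq₃ hq₁
          hp₂ hp₃ hp₁ h3₂ h3₃ h3₁ hN₂ hN₃ hN₁ (by linear_combination star) h3 h2 (by omega)
      · exact killSorted g₃ g₂ g₁ t₃ t₂ t₁ q₃ q₂ q₁ N hg₃ hg₂ hg₁ ht₃ ht₂ ht₁ hq₃ hq₂ hq₁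
          hp₃ hp₂ hp₁ h3₃ h3₂ h3₁ hN₃ hN₂ hN₁ (by linear_combination star) h3 h1 (by omega)

lemma llenParity (a1 a2 b1 b2 : ℤ) (h : a1^2+a2^2 = b1^2+b2^2) :
    (Int.gcd (a1-b1) (a2-b2) : ℤ) % 2 = (a1-b1) % 2 := by
  have hc : ((a1-b1 : ℤ) : ZMod 2) = ((a2-b2 : ℤ) : ZMod 2) := by
    have hh := congrArg (fun z : ℤ => (z : ZMod 2)) h
    push_cast at hh ⊢
    have sq : ∀ x : ZMod 2, x^2 = x := by decide
    rw [sq (a1 : ZMod 2), sq (a2 : ZMod 2), sq (b1 : ZMod 2), sq (b2 : ZMod 2)] at hh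
    have h2z : (2 : ZMod 2) = 0 := by decide
    linear_combination hh + ((b2 : ZMod 2) - (a2 : ZMod 2)) * h2z
  have hcong : (a1-b1) % 2 = (a2-b2) % 2 := by
    have := (ZMod.intCast_eq_intCast_iff' (a := a1-b1) (b := a2-b2) (c := 2)).mp hc
    omega
  have hdvd1 : ((Int.gcd (a1-b1) (a2-b2) : ℤ)) ∣ (a1-b1) := Int.gcd_dvd_left _ _
  rcases Int.even_or_odd (a1-b1) with ⟨k, hk⟩ | ⟨k, hk⟩
  · have h2 : (2:ℤ) ∣ a1-b1 := ⟨k, by omega⟩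
    have h2' : (2:ℤ) ∣ a2-b2 := by omega
    have hg : (2:ℤ) ∣ (Int.gcd (a1-b1) (a2-b2) : ℤ) := Int.dvd_coe_gcd h2 h2'
    omega
  · have h2 : ¬ (2:ℤ) ∣ a1-b1 := by omega
    have hg : ¬ (2:ℤ) ∣ (Int.gcd (a1-b1) (a2-b2) : ℤ) := fun hd => h2 (hd.trans hdvd1)
    omega

lemma gcd3aux (n : ℕ) (h : ¬ 3 ∣ n) : Nat.gcd 3 (2*n+3) = 1 := by
  rcases (Nat.dvd_prime Nat.prime_three).mp (Nat.gcd_dvd_left 3 (2*n+3)) with h1 | h1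
  · exact h1
  · exfalso
    have h2 := Nat.gcd_dvd_right 3 (2*n+3)
    rw [h1] at h2
    omega

lemma gcd4aux (n : ℕ) (h : n % 2 = 1) : Nat.gcd 4 (2*n+4) = 2 := by
  have h4 := Nat.gcd_dvd_left 4 (2*n+4)
  have hr := Nat.gcd_dvd_right 4 (2*n+4)
  have h2 : 2 ∣ Nat.gcd 4 (2*n+4) := Nat.dvd_gcd (by norm_num) ⟨n+2, by ring⟩
  have hb : Nat.gcd 4 (2*n+4) ≤ 4 := Nat.le_of_dvd (by norm_num) h4
  interval_cases hg : Nat.gcd 4 (2*n+4) <;> omega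
lemma gcd8aux (n : ℕ) (h : n % 2 = 1) : Nat.gcd 8 (2*n+8) = 2 := by
  have h4 := Nat.gcd_dvd_left 8 (2*n+8)
  have hr := Nat.gcd_dvd_right 8 (2*n+8)
  have h2 : 2 ∣ Nat.gcd 8 (2*n+8) := Nat.dvd_gcd (by norm_num) ⟨n+4, by ring⟩
  have hb : Nat.gcd 8 (2*n+8) ≤ 8 := Nat.le_of_dvd (by norm_num) h4
  interval_cases hg : Nat.gcd 8 (2*n+8) <;> omega

lemma familyCons (n d : ℕ) (hn : 1 ≤ n) (hd : 1 ≤ d) :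
    ∃ V₀ V₁ V₂ F : ℤ × ℤ, IsAcute V₀ V₁ V₂ ∧ IsCircumcenter F V₀ V₁ V₂ ∧
      latPerim V₀ V₁ V₂ = Nat.gcd d (2*n+d) + (2*n+d) + (2*n+2*d) := by
  have hn' : (1:ℤ) ≤ (n:ℤ) := by exact_mod_cast hn
  have hd' : (1:ℤ) ≤ (d:ℤ) := by exact_mod_cast hd
  refine ⟨(-((n:ℤ)+(d:ℤ)), (n:ℤ)), (-(n:ℤ), -((n:ℤ)+(d:ℤ))), (((n:ℤ)+(d:ℤ)), (n:ℤ)), (0,0),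
    ⟨?_, ?_, ?_⟩, ⟨?_, ?_⟩, ?_⟩
  · show 0 < dotv _ _
    unfold dotv
    simp only [Prod.fst_sub, Prod.snd_sub]
    nlinarith
  · show 0 < dotv _ _
    unfold dotv
    simp only [Prod.fst_sub, Prod.snd_sub]
    nlinarith
  · show 0 < dotv _ _
    unfold dotv
    simp only [Prod.fst_sub, Prod.snd_sub]
    nlinarith
  · unfold dotv
    simp only [Prod.fst_sub, Prod.snd_sub]
    ring
  · unfold dotv
    simp only [Prod.fst_sub, Prod.snd_sub]
    ring
  · unfold latPerim llen
    simp only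
    have e1 : Int.gcd (-((n:ℤ)+(d:ℤ)) - -(n:ℤ)) ((n:ℤ) - -((n:ℤ)+(d:ℤ))) = Nat.gcd d (2*n+d) := by
      unfold Int.gcd
      congr 1 <;> omega
    have e2 : Int.gcd (-(n:ℤ) - ((n:ℤ)+(d:ℤ))) (-((n:ℤ)+(d:ℤ)) - (n:ℤ)) = 2*n+d := by
      unfold Int.gcd
      have h1 : (-(n:ℤ) - ((n:ℤ)+(d:ℤ))).natAbs = 2*n+d := by omega
      have h2 : (-((n:ℤ)+(d:ℤ)) - (n:ℤ)).natAbs = 2*n+d := by omega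
      rw [h1, h2, Nat.gcd_self]
    have e3 : Int.gcd (-((n:ℤ)+(d:ℤ)) - ((n:ℤ)+(d:ℤ))) ((n:ℤ) - (n:ℤ)) = 2*n+2*d := by
      unfold Int.gcd
      have h1 : (-((n:ℤ)+(d:ℤ)) - ((n:ℤ)+(d:ℤ))).natAbs = 2*n+2*d := by omega
      have h2 : ((n:ℤ) - (n:ℤ)).natAbs = 0 := by omega
      rw [h1, h2, Nat.gcd_zero_right]
    rw [e1, e2, e3]

set_option maxHeartbeats 2000000 in
lemma vectorKill (a1 a2 b1 b2 c1 c2 : ℤ)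
    (hab : a1^2+a2^2 = b1^2+b2^2) (hac : a1^2+a2^2 = c1^2+c2^2)
    (hd1 : 0 < (b1-a1)*(c1-a1) + (b2-a2)*(c2-a2))
    (hd2 : 0 < (a1-b1)*(c1-b1) + (a2-b2)*(c2-b2))
    (hd3 : 0 < (a1-c1)*(b1-c1) + (a2-c2)*(b2-c2))
    (hsum : (Int.gcd (b1-c1) (b2-c2) : ℤ) + (Int.gcd (c1-a1) (c2-a2) : ℤ) +
        (Int.gcd (a1-b1) (a2-b2) : ℤ) = 4 ∨
      (Int.gcd (b1-c1) (b2-c2) : ℤ) + (Int.gcd (c1-a1) (c2-a2) : ℤ) +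
        (Int.gcd (a1-b1) (a2-b2) : ℤ) = 6 ∨
      (Int.gcd (b1-c1) (b2-c2) : ℤ) + (Int.gcd (c1-a1) (c2-a2) : ℤ) +
        (Int.gcd (a1-b1) (a2-b2) : ℤ) = 10) : False := by
  have hne1 : ¬(b1 - c1 = 0 ∧ b2 - c2 = 0) := by
    rintro ⟨h1, h2⟩
    have e : (a1-b1)*(c1-b1) + (a2-b2)*(c2-b2) = 0 := by
      linear_combination (-(a1-b1))*h1 + (-(a2-b2))*h2
    linarith
  have hne2 : ¬(c1 - a1 = 0 ∧ c2 - a2 = 0) := by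
    rintro ⟨h1, h2⟩
    have e : (a1-c1)*(b1-c1) + (a2-c2)*(b2-c2) = 0 := by
      linear_combination (-(b1-c1))*h1 + (-(b2-c2))*h2
    linarith
  have hne3 : ¬(a1 - b1 = 0 ∧ a2 - b2 = 0) := by
    rintro ⟨h1, h2⟩
    have e : (a1-b1)*(c1-b1) + (a2-b2)*(c2-b2) = 0 := by
      linear_combination (c1-b1)*h1 + (c2-b2)*h2
    linarith
  obtain ⟨t₁, q₁, hq₁, h4N₁, hx₁, hC₁, hp₁, h3₁, hz₁⟩ :=
    chord (b1,b2) (c1,c2) hne1 (by linarith)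
  obtain ⟨t₂, q₂, hq₂, h4N₂, hx₂, hC₂, hp₂, h3₂, hz₂⟩ :=
    chord (c1,c2) (a1,a2) hne2 (by linarith)
  obtain ⟨t₃, q₃, hq₃, h4N₃, hx₃, hC₃, hp₃, h3₃, hz₃⟩ :=
    chord (a1,a2) (b1,b2) hne3 hab
  dsimp only at h4N₁ hx₁ hC₁ hz₁ h4N₂ hx₂ hC₂ hz₂ h4N₃ hx₃ hC₃ hz₃
  have hG₁ : 1 ≤ (Int.gcd (b1-c1) (b2-c2) : ℤ) := by
    have h : Int.gcd (b1-c1) (b2-c2) ≠ 0 := by rw [Ne, Int.gcd_eq_zero_iff]; tauto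
    exact_mod_cast Nat.one_le_iff_ne_zero.mpr h
  have hG₂ : 1 ≤ (Int.gcd (c1-a1) (c2-a2) : ℤ) := by
    have h : Int.gcd (c1-a1) (c2-a2) ≠ 0 := by rw [Ne, Int.gcd_eq_zero_iff]; tauto
    exact_mod_cast Nat.one_le_iff_ne_zero.mpr h
  have hG₃ : 1 ≤ (Int.gcd (a1-b1) (a2-b2) : ℤ) := by
    have h : Int.gcd (a1-b1) (a2-b2) ≠ 0 := by rw [Ne, Int.gcd_eq_zero_iff]; tauto
    exact_mod_cast Nat.one_le_iff_ne_zero.mpr h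
  set G₁ : ℤ := (Int.gcd (b1-c1) (b2-c2) : ℤ)
  set G₂ : ℤ := (Int.gcd (c1-a1) (c2-a2) : ℤ)
  set G₃ : ℤ := (Int.gcd (a1-b1) (a2-b2) : ℤ)
  clear_value G₁ G₂ G₃
  have hN0 : 0 < a1^2+a2^2 := by
    rcases lt_or_eq_of_le (by positivity : (0:ℤ) ≤ a1^2+a2^2) with h | h
    · exact h
    · exfalso
      have ha1 : a1 = 0 := by nlinarith
      have ha2 : a2 = 0 := by nlinarith
      have hb1 : b1 = 0 := by nlinarith
      have hb2 : b2 = 0 := by nlinarith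
      exact hne3 ⟨by omega, by omega⟩
  have h4N₁' : q₁*(t₁^2+G₁^2) = 4*(a1^2+a2^2) := by linear_combination h4N₁ - 4*hab
  have h4N₂' : q₂*(t₂^2+G₂^2) = 4*(a1^2+a2^2) := by linear_combination h4N₂ - 4*hac
  have ht₁ : t₁ ≠ 0 := by
    intro h0; obtain ⟨hz1, hz2⟩ := hz₁ h0
    have e : (b1-a1)*(c1-a1) + (b2-a2)*(c2-a2) = 0 := by
      linear_combination (c1-a1)*hz1 + (c2-a2)*hz2 + hac
    linarith
  have ht₂ : t₂ ≠ 0 := by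
    intro h0; obtain ⟨hz1, hz2⟩ := hz₂ h0
    have e : (a1-b1)*(c1-b1) + (a2-b2)*(c2-b2) = 0 := by
      linear_combination (a1-b1)*hz1 + (a2-b2)*hz2 - hab
    linarith
  have ht₃ : t₃ ≠ 0 := by
    intro h0; obtain ⟨hz1, hz2⟩ := hz₃ h0
    have e : (a1-c1)*(b1-c1) + (a2-c2)*(b2-c2) = 0 := by
      linear_combination (b1-c1)*hz1 + (b2-c2)*hz2 - hac + hab
    linarith
  have hC1ne : b1*c2 - b2*c1 ≠ 0 := by
    intro h0
    have h' := hC₁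
    rw [h0, mul_zero] at h'
    rcases mul_eq_zero.mp h'.symm with h | h
    · linarith
    · rcases mul_eq_zero.mp h with h' | h'
      · linarith
      · exact ht₁ h'
  have hC2ne : c1*a2 - c2*a1 ≠ 0 := by
    intro h0
    have h' := hC₂
    rw [h0, mul_zero] at h'
    rcases mul_eq_zero.mp h'.symm with h | h
    · linarith
    · rcases mul_eq_zero.mp h with h' | h'
      · linarith
      · exact ht₂ h'
  have hC3ne : a1*b2 - a2*b1 ≠ 0 := by
    intro h0
    have h' := hC₃
    rw [h0, mul_zero] at h'
    rcases mul_eq_zero.mp h'.symm with h | h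
    · linarith
    · rcases mul_eq_zero.mp h with h' | h'
      · linarith
      · exact ht₃ h'
  have hsign := sameSign (a1^2+a2^2) (b1*c1+b2*c2) (c1*a1+c2*a2) (a1*b1+a2*b2)
    (b1*c2-b2*c1) (c1*a2-c2*a1) (a1*b2-a2*b1) hN0
    (by ring) (by linear_combination (c1*a2-c2*a1)*hab) (by linear_combination (a1*b2-a2*b1)*hac)
    (by ring) (by linear_combination (c1*a1+c2*a2)*hab) (by linear_combination (a1*b1+a2*b2)*hac)
    (by linear_combination (-(a1^2+a2^2))*hab - (b1^2+b2^2)*hac)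
    (by linear_combination (-(a1^2+a2^2))*hac) (by linear_combination (-(a1^2+a2^2))*hab)
    (by linarith [show (b1-a1)*(c1-a1) + (b2-a2)*(c2-a2) =
        (a1^2+a2^2) + (b1*c1+b2*c2) - (c1*a1+c2*a2) - (a1*b1+a2*b2) from by ring])
    (by nlinarith [hd2, hab])
    (by nlinarith [hd3, hac])
    hC1ne hC2ne hC3ne
  have hstar : G₁*(t₂*t₃) + G₂*(t₁*t₃) + G₃*(t₁*t₂) = G₁*G₂*G₃ :=
    starAux G₁ G₂ G₃ t₁ t₂ t₃ q₁ q₂ q₃ (a1^2+a2^2) (b1*c1+b2*c2) (c1*a1+c2*a2) (a1*b1+a2*b2)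
      (b1*c2-b2*c1) (c1*a2-c2*a1) (a1*b2-a2*b1)
      (by linarith) (by linarith) (by linarith) hN0 h4N₃ hx₁ hx₂ hx₃ hC₁ hC₂ hC₃
      (by linear_combination (a1*b1+a2*b2)*hac) (by linear_combination (a1*b2-a2*b1)*hac)
  rcases hsign with ⟨s1, s2, s3⟩ | ⟨s1, s2, s3⟩
  · have hT₁ : 1 ≤ t₁ := by
      rcases lt_or_ge 0 t₁ with h | h
      · omega
      · exfalso
        have hnn : 0 ≤ (q₁*G₁)*(-t₁) :=
          mul_nonneg (mul_nonneg (by linarith) (by linarith)) (by linarith)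
        nlinarith [hC₁, s1]
    have hT₂ : 1 ≤ t₂ := by
      rcases lt_or_ge 0 t₂ with h | h
      · omega
      · exfalso
        have hnn : 0 ≤ (q₂*G₂)*(-t₂) :=
          mul_nonneg (mul_nonneg (by linarith) (by linarith)) (by linarith)
        nlinarith [hC₂, s2]
    have hT₃ : 1 ≤ t₃ := by
      rcases lt_or_ge 0 t₃ with h | h
      · omega
      · exfalso
        have hnn : 0 ≤ (q₃*G₃)*(-t₃) :=
          mul_nonneg (mul_nonneg (by linarith) (by linarith)) (by linarith)
        nlinarith [hC₃, s3]
    exact killMain G₁ G₂ G₃ t₁ t₂ t₃ q₁ q₂ q₃ (a1^2+a2^2) hG₁ hG₂ hG₃ hT₁ hT₂ hT₃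
      hq₁ hq₂ hq₃ hp₁ hp₂ hp₃ h3₁ h3₂ h3₃ h4N₁' h4N₂' h4N₃ hstar hsum
  · have hT₁ : 1 ≤ -t₁ := by
      rcases lt_or_ge t₁ 0 with h | h
      · omega
      · exfalso
        have hnn : 0 ≤ (q₁*G₁)*t₁ :=
          mul_nonneg (mul_nonneg (by linarith) (by linarith)) (by linarith)
        nlinarith [hC₁, s1]
    have hT₂ : 1 ≤ -t₂ := by
      rcases lt_or_ge t₂ 0 with h | h
      · omega
      · exfalso
        have hnn : 0 ≤ (q₂*G₂)*t₂ :=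
          mul_nonneg (mul_nonneg (by linarith) (by linarith)) (by linarith)
        nlinarith [hC₂, s2]
    have hT₃ : 1 ≤ -t₃ := by
      rcases lt_or_ge t₃ 0 with h | h
      · omega
      · exfalso
        have hnn : 0 ≤ (q₃*G₃)*t₃ :=
          mul_nonneg (mul_nonneg (by linarith) (by linarith)) (by linarith)
        nlinarith [hC₃, s3]
    exact killMain G₁ G₂ G₃ (-t₁) (-t₂) (-t₃) q₁ q₂ q₃ (a1^2+a2^2) hG₁ hG₂ hG₃ hT₁ hT₂ hT₃
      hq₁ hq₂ hq₃ (by omega) (by omega) (by omega) h3₁ h3₂ h3₃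
      (by linear_combination h4N₁') (by linear_combination h4N₂') (by linear_combination h4N₃)
      (by linear_combination hstar) hsum

theorem stmt17 (ℓ : ℕ) :
    (Even ℓ →
      ((∃ V₀ V₁ V₂ F : ℤ × ℤ, IsAcute V₀ V₁ V₂ ∧ IsCircumcenter F V₀ V₁ V₂ ∧
          latPerim V₀ V₁ V₂ = ℓ) ↔ (ℓ = 8 ∨ 12 ≤ ℓ))) ∧
    (Odd ℓ →
      ¬ ∃ V₀ V₁ V₂ F : ℤ × ℤ, Noncollinear V₀ V₁ V₂ ∧ IsCircumcenter F V₀ V₁ V₂ ∧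
          latPerim V₀ V₁ V₂ = ℓ) := by
  constructor
  · intro hEven
    constructor
    · rintro ⟨V₀, V₁, V₂, F, hA, hF, hP⟩
      obtain ⟨hA1, hA2, hA3⟩ := hA
      obtain ⟨hF1, hF2⟩ := hF
      simp only [dotv, Prod.fst_sub, Prod.snd_sub] at hA1 hA2 hA3 hF1 hF2
      have hab : (V₀.1-F.1)^2+(V₀.2-F.2)^2 = (V₁.1-F.1)^2+(V₁.2-F.2)^2 := by
        linear_combination hF1
      have hac : (V₀.1-F.1)^2+(V₀.2-F.2)^2 = (V₂.1-F.1)^2+(V₂.2-F.2)^2 := by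
        linear_combination hF2
      have e3 : (llen V₀ V₁ : ℤ) =
          (Int.gcd ((V₀.1-F.1)-(V₁.1-F.1)) ((V₀.2-F.2)-(V₁.2-F.2)) : ℤ) := by
        have a1 : (V₀.1-F.1)-(V₁.1-F.1) = V₀.1-V₁.1 := by ring
        have a2 : (V₀.2-F.2)-(V₁.2-F.2) = V₀.2-V₁.2 := by ring
        rw [a1, a2]; rfl
      have e1 : (llen V₁ V₂ : ℤ) =
          (Int.gcd ((V₁.1-F.1)-(V₂.1-F.1)) ((V₁.2-F.2)-(V₂.2-F.2)) : ℤ) := by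
        have a1 : (V₁.1-F.1)-(V₂.1-F.1) = V₁.1-V₂.1 := by ring
        have a2 : (V₁.2-F.2)-(V₂.2-F.2) = V₁.2-V₂.2 := by ring
        rw [a1, a2]; rfl
      have e2 : (llen V₀ V₂ : ℤ) =
          (Int.gcd ((V₂.1-F.1)-(V₀.1-F.1)) ((V₂.2-F.2)-(V₀.2-F.2)) : ℤ) := by
        have a1 : (V₂.1-F.1)-(V₀.1-F.1) = -(V₀.1-V₂.1) := by ring
        have a2 : (V₂.2-F.2)-(V₀.2-F.2) = -(V₀.2-V₂.2) := by ring
        rw [a1, a2, Int.neg_gcd, Int.gcd_neg]; rfl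
      have hne01 : llen V₀ V₁ ≠ 0 := by
        unfold llen
        rw [Ne, Int.gcd_eq_zero_iff]
        rintro ⟨u1, u2⟩
        have e : (V₁.1-V₀.1)*(V₂.1-V₀.1)+(V₁.2-V₀.2)*(V₂.2-V₀.2) = 0 := by
          linear_combination (-(V₂.1-V₀.1))*u1 - (V₂.2-V₀.2)*u2
        linarith
      have hne12 : llen V₁ V₂ ≠ 0 := by
        unfold llen
        rw [Ne, Int.gcd_eq_zero_iff]
        rintro ⟨u1, u2⟩
        have e : (V₀.1-V₂.1)*(V₁.1-V₂.1)+(V₀.2-V₂.2)*(V₁.2-V₂.2) = 0 := by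
          linear_combination (V₀.1-V₂.1)*u1 + (V₀.2-V₂.2)*u2
        linarith
      have hne02 : llen V₀ V₂ ≠ 0 := by
        unfold llen
        rw [Ne, Int.gcd_eq_zero_iff]
        rintro ⟨u1, u2⟩
        have e : (V₀.1-V₂.1)*(V₁.1-V₂.1)+(V₀.2-V₂.2)*(V₁.2-V₂.2) = 0 := by
          linear_combination (V₁.1-V₂.1)*u1 + (V₁.2-V₂.2)*u2
        linarith
      unfold latPerim at hP
      have hsum' : (llen V₀ V₁ : ℤ) + (llen V₁ V₂ : ℤ) + (llen V₀ V₂ : ℤ) = (ℓ : ℤ) := by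
        exact_mod_cast congrArg (fun n : ℕ => (n : ℤ)) hP
      have hex : ¬(ℓ = 4 ∨ ℓ = 6 ∨ ℓ = 10) := by
        intro hcase
        apply vectorKill (V₀.1-F.1) (V₀.2-F.2) (V₁.1-F.1) (V₁.2-F.2) (V₂.1-F.1) (V₂.2-F.2)
          hab hac
        · have e : ((V₁.1-F.1)-(V₀.1-F.1))*((V₂.1-F.1)-(V₀.1-F.1)) +
              ((V₁.2-F.2)-(V₀.2-F.2))*((V₂.2-F.2)-(V₀.2-F.2)) =
              (V₁.1-V₀.1)*(V₂.1-V₀.1)+(V₁.2-V₀.2)*(V₂.2-V₀.2) := by ring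
          linarith
        · have e : ((V₀.1-F.1)-(V₁.1-F.1))*((V₂.1-F.1)-(V₁.1-F.1)) +
              ((V₀.2-F.2)-(V₁.2-F.2))*((V₂.2-F.2)-(V₁.2-F.2)) =
              (V₀.1-V₁.1)*(V₂.1-V₁.1)+(V₀.2-V₁.2)*(V₂.2-V₁.2) := by ring
          linarith
        · have e : ((V₀.1-F.1)-(V₂.1-F.1))*((V₁.1-F.1)-(V₂.1-F.1)) +
              ((V₀.2-F.2)-(V₂.2-F.2))*((V₁.2-F.2)-(V₂.2-F.2)) =
              (V₀.1-V₂.1)*(V₁.1-V₂.1)+(V₀.2-V₂.2)*(V₁.2-V₂.2) := by ring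
          linarith
        · rw [← e1, ← e2, ← e3]
          omega
      have h4 : ℓ ≠ 4 := fun h => hex (Or.inl h)
      have h6 : ℓ ≠ 6 := fun h => hex (Or.inr (Or.inl h))
      have h10 : ℓ ≠ 10 := fun h => hex (Or.inr (Or.inr h))
      obtain ⟨k, hk⟩ := hEven
      omega
    · intro hc
      by_cases h4 : ℓ % 4 = 0
      · obtain ⟨V₀, V₁, V₂, F, c1, c2, c3⟩ := familyCons (ℓ/4 - 1) 1 (by omega) (by norm_num)
        refine ⟨V₀, V₁, V₂, F, c1, c2, ?_⟩
        rw [c3, Nat.gcd_one_left]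
        omega
      · obtain ⟨k0, hk0⟩ := hEven
        have h42 : ℓ % 4 = 2 := by omega
        by_cases h3d : ((ℓ-2)/4 - 2) % 3 = 0
        · by_cases hke : (ℓ-2)/4 % 2 = 0
          · obtain ⟨V₀, V₁, V₂, F, c1, c2, c3⟩ :=
              familyCons ((ℓ-2)/4 - 3) 4 (by omega) (by norm_num)
            refine ⟨V₀, V₁, V₂, F, c1, c2, ?_⟩
            rw [c3, gcd4aux _ (by omega)]
            omega
          · by_cases hk5 : (ℓ-2)/4 = 5
            · refine ⟨(-7,1), (-5,-5), (7,1), (0,0), by unfold IsAcute dotv; decide,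
                by unfold IsCircumcenter dotv; decide, ?_⟩
              have h22 : ℓ = 22 := by omega
              rw [h22]
              decide
            · obtain ⟨V₀, V₁, V₂, F, c1, c2, c3⟩ :=
                familyCons ((ℓ-2)/4 - 6) 8 (by omega) (by norm_num)
              refine ⟨V₀, V₁, V₂, F, c1, c2, ?_⟩
              rw [c3, gcd8aux _ (by omega)]
              omega
        · obtain ⟨V₀, V₁, V₂, F, c1, c2, c3⟩ :=
            familyCons ((ℓ-2)/4 - 2) 3 (by omega) (by norm_num)
          refine ⟨V₀, V₁, V₂, F, c1, c2, ?_⟩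
          rw [c3, gcd3aux _ (by omega)]
          omega
  · rintro hOdd ⟨V₀, V₁, V₂, F, hNC, hF, hP⟩
    obtain ⟨hF1, hF2⟩ := hF
    simp only [dotv, Prod.fst_sub, Prod.snd_sub] at hF1 hF2
    have hab : (V₀.1-F.1)^2+(V₀.2-F.2)^2 = (V₁.1-F.1)^2+(V₁.2-F.2)^2 := by
      linear_combination hF1
    have hac : (V₀.1-F.1)^2+(V₀.2-F.2)^2 = (V₂.1-F.1)^2+(V₂.2-F.2)^2 := by
      linear_combination hF2
    have hbc : (V₁.1-F.1)^2+(V₁.2-F.2)^2 = (V₂.1-F.1)^2+(V₂.2-F.2)^2 := by linarith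
    have p3 : (llen V₀ V₁ : ℤ) % 2 = (V₀.1 - V₁.1) % 2 := by
      have h := llenParity (V₀.1-F.1) (V₀.2-F.2) (V₁.1-F.1) (V₁.2-F.2) hab
      have a1 : (V₀.1-F.1)-(V₁.1-F.1) = V₀.1-V₁.1 := by ring
      have a2 : (V₀.2-F.2)-(V₁.2-F.2) = V₀.2-V₁.2 := by ring
      rw [a1, a2] at h
      exact h
    have p1 : (llen V₁ V₂ : ℤ) % 2 = (V₁.1 - V₂.1) % 2 := by
      have h := llenParity (V₁.1-F.1) (V₁.2-F.2) (V₂.1-F.1) (V₂.2-F.2) hbc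
      have a1 : (V₁.1-F.1)-(V₂.1-F.1) = V₁.1-V₂.1 := by ring
      have a2 : (V₁.2-F.2)-(V₂.2-F.2) = V₁.2-V₂.2 := by ring
      rw [a1, a2] at h
      exact h
    have p2 : (llen V₀ V₂ : ℤ) % 2 = (V₀.1 - V₂.1) % 2 := by
      have h := llenParity (V₀.1-F.1) (V₀.2-F.2) (V₂.1-F.1) (V₂.2-F.2) hac
      have a1 : (V₀.1-F.1)-(V₂.1-F.1) = V₀.1-V₂.1 := by ring
      have a2 : (V₀.2-F.2)-(V₂.2-F.2) = V₀.2-V₂.2 := by ring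
      rw [a1, a2] at h
      exact h
    unfold latPerim at hP
    have hcast : (llen V₀ V₁ : ℤ) + (llen V₁ V₂ : ℤ) + (llen V₀ V₂ : ℤ) = (ℓ : ℤ) := by
      exact_mod_cast congrArg (fun n : ℕ => (n : ℤ)) hP
    obtain ⟨k, hk⟩ := hOdd
    omega
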